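/- For every integer k ≥ 2 and every integer t ≥ 1, the strict asymptotic density with respect to the sup-norm of the set U_t of t-visible points in ℤ^k equals 1/(t^k · ζ(k)). That is, lim_{n→∞} #{z ∈ ℤ^k : ‖z‖_∞ ≤ n and gcd of the coordinates of z equals t} / #{z ∈ ℤ^k : ‖z‖_∞ ≤ n} = 1/(t^k ζ(k)). -/

import Mathlib

open Filter ArithmeticFunction Finset
open scoped ArithmeticFunction.Moebius ArithmeticFunction.zeta

namespace DensityVisible



variable (k : ℕ)

noncomputable def box (n : ℕ) : Finset (Fin k → ℤ) := Fintype.piFinset fun _ => Finset.Icc (-(n:ℤ)) n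

lemma mem_box {n : ℕ} {z : Fin k → ℤ} : z ∈ box k n ↔ ∀ i, (z i).natAbs ≤ n := by
  simp only [box, Fintype.mem_piFinset, Finset.mem_Icc]
  refine forall_congr' fun i => ?_
  rw [← abs_le, Int.abs_eq_natAbs, Int.ofNat_le]

lemma mem_box' {n : ℕ} {z : Fin k → ℤ} : z ∈ box k n ↔ ∀ i, |z i| ≤ (n:ℤ) := by
  rw [mem_box]
  refine forall_congr' fun i => ?_
  rw [Int.abs_eq_natAbs, Int.ofNat_le]

lemma card_box (n : ℕ) : (box k n).card = (2*n+1)^k := by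
  rw [box, Fintype.card_piFinset]
  have : ((Finset.Icc (-(n:ℤ)) n)).card = 2*n+1 := by
    rw [Int.card_Icc]
    omega
  simp [this]

lemma zero_mem_box (n : ℕ) : (0 : Fin k → ℤ) ∈ box k n := by
  simp [mem_box]

lemma card_dvd_box (n d : ℕ) (hd : 0 < d) :
    ((box k n).filter (fun z => ∀ i, (d:ℤ) ∣ z i)).card = (2*(n/d)+1)^k := by
  rw [← card_box k (n/d)]
  have hd0 : (d:ℤ) ≠ 0 := by exact_mod_cast hd.ne'
  apply Finset.card_bij' (fun z _ => fun i => z i / (d:ℤ)) (fun w _ => fun i => (d:ℤ) * w i)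
  · intro z hz
    rw [Finset.mem_filter, mem_box] at hz
    rw [mem_box]
    intro i
    obtain ⟨hbox, hdvd⟩ := hz
    have hzi : (d:ℤ) * (z i / d) = z i := Int.mul_ediv_cancel' (hdvd i)
    rw [Nat.le_div_iff_mul_le hd, mul_comm]
    have : (z i).natAbs = d * (z i / d).natAbs := by
      conv_lhs => rw [← hzi]
      rw [Int.natAbs_mul, Int.natAbs_natCast]
    rw [← this]
    exact hbox i
  · intro w hw
    rw [mem_box] at hw
    rw [Finset.mem_filter, mem_box]
    refine ⟨fun i => ?_, fun i => Dvd.intro _ rfl⟩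
    rw [Int.natAbs_mul, Int.natAbs_natCast]
    calc d * (w i).natAbs ≤ d * (n / d) := Nat.mul_le_mul_left d (hw i)
    _ ≤ n := Nat.mul_div_le n d
  · intro z hz
    rw [Finset.mem_filter] at hz
    funext i
    exact Int.mul_ediv_cancel' (hz.2 i)
  · intro w _
    funext i
    exact Int.mul_ediv_cancel_left _ hd0

lemma card_gcd_eq (n t : ℕ) (ht : 0 < t) :
    ((box k n).filter (fun z => z ≠ 0 ∧ Finset.univ.gcd (fun i => (z i).natAbs) = t)).card =
    ((box k (n/t)).filter (fun w => w ≠ 0 ∧ Finset.univ.gcd (fun i => (w i).natAbs) = 1)).card := by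
  have ht0 : (t:ℤ) ≠ 0 := by exact_mod_cast ht.ne'
  apply Finset.card_bij' (fun z _ => fun i => z i / (t:ℤ)) (fun w _ => fun i => (t:ℤ) * w i)
  · intro z hz
    rw [Finset.mem_filter, mem_box] at hz
    obtain ⟨hbox, hz0, hgcd⟩ := hz
    have hdvd : ∀ i, (t:ℤ) ∣ z i := by
      intro i
      rw [Int.natCast_dvd]
      exact hgcd ▸ Finset.gcd_dvd (Finset.mem_univ i)
    have hzi : ∀ i, (t:ℤ) * (z i / t) = z i := fun i => Int.mul_ediv_cancel' (hdvd i)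
    have habs : ∀ i, (z i).natAbs = t * (z i / t).natAbs := by
      intro i
      conv_lhs => rw [← hzi i]
      rw [Int.natAbs_mul, Int.natAbs_natCast]
    rw [Finset.mem_filter, mem_box]
    refine ⟨fun i => ?_, ?_, ?_⟩
    · rw [Nat.le_div_iff_mul_le ht, mul_comm, ← habs i]
      exact hbox i
    · intro h0
      apply hz0
      funext i
      rw [← hzi i, congrFun h0 i]
      simp
    · have : Finset.univ.gcd (fun i => (z i).natAbs) =
          t * Finset.univ.gcd (fun i => (z i / (t:ℤ)).natAbs) := by
        rw [show (fun i => (z i).natAbs) = fun i => t * (z i / (t:ℤ)).natAbs from funext habs]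
        rw [Finset.gcd_mul_left]
        simp
      rw [this] at hgcd
      exact Nat.eq_of_mul_eq_mul_left ht (by rw [hgcd, mul_one])
  · intro w hw
    rw [Finset.mem_filter, mem_box] at hw
    obtain ⟨hbox, hw0, hgcd⟩ := hw
    rw [Finset.mem_filter, mem_box]
    refine ⟨fun i => ?_, ?_, ?_⟩
    · rw [Int.natAbs_mul, Int.natAbs_natCast]
      calc t * (w i).natAbs ≤ t * (n / t) := Nat.mul_le_mul_left t (hbox i)
      _ ≤ n := Nat.mul_div_le n t
    · intro h0
      apply hw0
      funext i
      have := congrFun h0 i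
      simp only [Pi.zero_apply, mul_eq_zero] at this ⊢
      tauto
    · have : (Finset.univ.gcd fun i => ((t:ℤ) * w i).natAbs) =
          t * Finset.univ.gcd (fun i => (w i).natAbs) := by
        rw [show (fun i => ((t:ℤ) * w i).natAbs) = fun i => t * (w i).natAbs from
          funext fun i => by rw [Int.natAbs_mul, Int.natAbs_natCast]]
        rw [Finset.gcd_mul_left]
        simp
      rw [this, hgcd, mul_one]
  · intro z hz
    rw [Finset.mem_filter, mem_box] at hz
    obtain ⟨hbox, hz0, hgcd⟩ := hz
    have hdvd : ∀ i, (t:ℤ) ∣ z i := by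
      intro i
      rw [Int.natCast_dvd]
      exact hgcd ▸ Finset.gcd_dvd (Finset.mem_univ i)
    funext i
    exact Int.mul_ediv_cancel' (hdvd i)
  · intro w _
    funext i
    exact Int.mul_ediv_cancel_left _ ht0


lemma moebius_sum_divisors (n : ℕ) (hn : n ≠ 0) :
    ∑ d ∈ n.divisors, μ d = if n = 1 then 1 else 0 := by
  have h : (μ * ζ : ArithmeticFunction ℤ) n = (1 : ArithmeticFunction ℤ) n := by
    rw [moebius_mul_coe_zeta]
  rw [mul_apply, one_apply] at h
  simp only [natCoe_apply] at h
  rw [Nat.sum_divisorsAntidiagonal (fun d e => (μ d : ℤ) * ((ζ e : ℕ) : ℤ))] at h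
  rw [← h]
  refine Finset.sum_congr rfl fun d hd => ?_
  rw [Nat.mem_divisors] at hd
  have hd0 : d ≠ 0 := fun h0 => hn (by simpa [h0, zero_dvd_iff] using hd.1)
  have : n / d ≠ 0 :=
    Nat.div_ne_zero_iff.mpr ⟨hd0, Nat.le_of_dvd (Nat.pos_of_ne_zero hn) hd.1⟩
  rw [zeta_apply_ne this]
  simp



lemma gcd_ne_zero {k : ℕ} {z : Fin k → ℤ} (hz : z ≠ 0) :
    Finset.univ.gcd (fun i => (z i).natAbs) ≠ 0 := by
  rw [Ne, Finset.gcd_eq_zero_iff]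
  intro h
  apply hz
  funext i
  have := h i (Finset.mem_univ i)
  exact Int.natAbs_eq_zero.mp this

lemma gcd_le {k m : ℕ} {z : Fin k → ℤ} (hz : z ≠ 0) (hbox : ∀ i, (z i).natAbs ≤ m) :
    Finset.univ.gcd (fun i => (z i).natAbs) ≤ m := by
  have : ∃ i, z i ≠ 0 := by
    by_contra h
    push_neg at h
    exact hz (funext h)
  obtain ⟨i, hi⟩ := this
  have h1 : (z i).natAbs ≠ 0 := Int.natAbs_ne_zero.mpr hi
  calc Finset.univ.gcd (fun i => (z i).natAbs) ≤ (z i).natAbs :=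
        Nat.le_of_dvd (Nat.pos_of_ne_zero h1) (Finset.gcd_dvd (Finset.mem_univ i))
    _ ≤ m := hbox i

lemma card_visible (k m : ℕ) (hk : 0 < k) :
    ((((box k m).filter (fun z => z ≠ 0 ∧
        Finset.univ.gcd (fun i => (z i).natAbs) = 1)).card : ℤ)) =
    ∑ d ∈ Finset.Icc 1 m, μ d * (((2*(m/d)+1 : ℕ) : ℤ)^k - 1) := by
  classical
  set g : (Fin k → ℤ) → ℕ := fun z => Finset.univ.gcd (fun i => (z i).natAbs) with hg
  set S := (box k m).filter (fun z => z ≠ (0 : Fin k → ℤ)) with hS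
  have h1 : (box k m).filter (fun z => z ≠ 0 ∧ g z = 1) = S.filter (fun z => g z = 1) := by
    rw [hS, Finset.filter_filter]
  rw [h1, Finset.card_filter]
  push_cast
  have h2 : ∀ z ∈ S, (if g z = 1 then (1:ℤ) else 0) = ∑ d ∈ (g z).divisors, μ d := by
    intro z hz
    rw [hS, Finset.mem_filter] at hz
    rw [moebius_sum_divisors (g z) (gcd_ne_zero hz.2)]
  rw [Finset.sum_congr rfl h2]
  have h3 : ∀ z ∈ S, (g z).divisors = (Finset.Icc 1 m).filter (· ∣ g z) := by
    intro z hz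
    rw [hS, Finset.mem_filter, mem_box] at hz
    ext d
    rw [Nat.mem_divisors, Finset.mem_filter, Finset.mem_Icc]
    constructor
    · rintro ⟨hdvd, hne⟩
      refine ⟨⟨Nat.pos_of_ne_zero fun h0 => hne (by simpa [h0, zero_dvd_iff] using hdvd), ?_⟩, hdvd⟩
      calc d ≤ g z := Nat.le_of_dvd (Nat.pos_of_ne_zero hne) hdvd
        _ ≤ m := gcd_le hz.2 hz.1
    · rintro ⟨_, hdvd⟩
      exact ⟨hdvd, gcd_ne_zero hz.2⟩
  rw [Finset.sum_congr rfl fun z hz => by rw [h3 z hz, Finset.sum_filter]]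
  rw [Finset.sum_comm]
  refine Finset.sum_congr rfl fun d hd => ?_
  rw [Finset.mem_Icc] at hd
  have hd1 : 0 < d := hd.1
  have hstep : ∀ z, d ∣ g z ↔ ∀ i, (d:ℤ) ∣ z i := by
    intro z
    rw [hg, Finset.dvd_gcd_iff]
    constructor
    · intro h i
      rw [Int.natCast_dvd]
      exact h i (Finset.mem_univ i)
    · intro h i _
      rw [← Int.natCast_dvd]
      exact h i
  rw [← Finset.sum_filter]
  rw [Finset.sum_const]
  have hcard : (S.filter (fun z => d ∣ g z)).card = (2*(m/d)+1)^k - 1 := by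
    have e1 : S.filter (fun z => d ∣ g z) =
        ((box k m).filter (fun z => ∀ i, (d:ℤ) ∣ z i)).erase 0 := by
      ext z
      rw [hS, Finset.filter_filter, Finset.mem_erase, Finset.mem_filter, Finset.mem_filter]
      simp only [hstep]
      tauto
    rw [e1, Finset.card_erase_of_mem, card_dvd_box k m d hd1]
    rw [Finset.mem_filter]
    exact ⟨zero_mem_box k m, fun i => by simp⟩
  rw [hcard]
  have hpow : 1 ≤ (2*(m/d)+1)^k := Nat.one_le_pow _ _ (by omega)
  rw [nsmul_eq_mul]
  push_cast [hpow]
  ring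



lemma tendsto_inv_two_mul_add_one :
    Tendsto (fun m : ℕ => 1/(2*(m:ℝ)+1)) atTop (nhds 0) := by
  simp only [one_div]
  apply Tendsto.inv_tendsto_atTop
  apply tendsto_atTop_add_const_right
  exact (tendsto_natCast_atTop_atTop (R := ℝ)).const_mul_atTop (by norm_num)

lemma key_tendsto (d : ℕ) (hd : 0 < d) :
    Tendsto (fun m : ℕ => ((2*(m/d : ℕ)+1 : ℝ))/(2*(m:ℝ)+1)) atTop (nhds (1/(d:ℝ))) := by
  have hd0 : (d:ℝ) ≠ 0 := by positivity
  have hB : ∀ m : ℕ, (0:ℝ) < 2*(m:ℝ)+1 := fun m => by positivity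
  have hlo : Tendsto (fun m : ℕ => (2*(m:ℝ)/d - 1)/(2*(m:ℝ)+1)) atTop (nhds (1/(d:ℝ))) := by
    have heq : ∀ᶠ m : ℕ in atTop, (2*(m:ℝ)/d - 1)/(2*(m:ℝ)+1) = (2/d - 1/m)/(2 + 1/m) := by
      filter_upwards [eventually_ge_atTop 1] with m hm
      have hm0 : (m:ℝ) ≠ 0 := by positivity
      field_simp
    rw [tendsto_congr' heq]
    have h1 : Tendsto (fun m : ℕ => (2/(d:ℝ) - 1/m)) atTop (nhds (2/d - 0)) :=
      tendsto_const_nhds.sub tendsto_one_div_atTop_nhds_zero_nat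
    have h2 : Tendsto (fun m : ℕ => (2 + 1/(m:ℝ))) atTop (nhds (2 + 0)) :=
      tendsto_const_nhds.add tendsto_one_div_atTop_nhds_zero_nat
    have := h1.div h2 (by norm_num)
    convert this using 2
    · rfl
    rw [sub_zero, add_zero]
    field_simp
  have hhi : Tendsto (fun m : ℕ => (2*(m:ℝ)/d + 1)/(2*(m:ℝ)+1)) atTop (nhds (1/(d:ℝ))) := by
    have heq : ∀ᶠ m : ℕ in atTop, (2*(m:ℝ)/d + 1)/(2*(m:ℝ)+1) = (2/d + 1/m)/(2 + 1/m) := by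
      filter_upwards [eventually_ge_atTop 1] with m hm
      have hm0 : (m:ℝ) ≠ 0 := by positivity
      field_simp
    rw [tendsto_congr' heq]
    have h1 : Tendsto (fun m : ℕ => (2/(d:ℝ) + 1/m)) atTop (nhds (2/d + 0)) :=
      tendsto_const_nhds.add tendsto_one_div_atTop_nhds_zero_nat
    have h2 : Tendsto (fun m : ℕ => (2 + 1/(m:ℝ))) atTop (nhds (2 + 0)) :=
      tendsto_const_nhds.add tendsto_one_div_atTop_nhds_zero_nat
    have := h1.div h2 (by norm_num)
    convert this using 2
    · rfl
    rw [add_zero, add_zero]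
    field_simp
  have hd' : (0:ℝ) < d := by positivity
  apply tendsto_of_tendsto_of_tendsto_of_le_of_le hlo hhi
  · intro m
    have hnat : m < (m/d + 1)*d := by
      calc m = d*(m/d) + m%d := (Nat.div_add_mod m d).symm
        _ < d*(m/d) + d := Nat.add_lt_add_left (Nat.mod_lt m hd) _
        _ = (m/d + 1)*d := by ring
    have hub : (m:ℝ) < ((m/d : ℕ) + 1)*d := by exact_mod_cast hnat
    have hq : (m:ℝ)/d ≤ ((m/d : ℕ):ℝ) + 1 := (div_le_iff₀ hd').mpr (le_of_lt hub)
    have hma : 2*(m:ℝ)/d = 2*((m:ℝ)/d) := mul_div_assoc 2 _ _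
    apply div_le_div_of_nonneg_right ?_ (hB m).le |>.trans_eq rfl
    linarith
  · intro m
    have hq : ((m/d : ℕ):ℝ) ≤ (m:ℝ)/d := by
      rw [le_div_iff₀ hd']
      exact_mod_cast Nat.div_mul_le_self m d
    have hma : 2*(m:ℝ)/d = 2*((m:ℝ)/d) := mul_div_assoc 2 _ _
    apply div_le_div_of_nonneg_right ?_ (hB m).le |>.trans_eq rfl
    linarith


noncomputable def F (k d m : ℕ) : ℝ :=
  (μ d : ℝ) * (((2*(m/d)+1 : ℕ) : ℝ)^k - 1) / ((2*(m:ℝ)+1)^k)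

lemma F_zero (k m : ℕ) : F k 0 m = 0 := by
  simp [F]

lemma F_of_lt {k d m : ℕ} (h : m < d) : F k d m = 0 := by
  simp [F, Nat.div_eq_of_lt h]

lemma F_tendsto (k d : ℕ) (hk : 0 < k) (hd : 0 < d) :
    Tendsto (fun m => F k d m) atTop (nhds ((μ d : ℝ)/(d:ℝ)^k)) := by
  have hB : ∀ m : ℕ, (0:ℝ) < 2*(m:ℝ)+1 := fun m => by positivity
  have heq : ∀ m : ℕ, F k d m =
      (μ d : ℝ) * (((2*((m/d : ℕ):ℝ)+1)/(2*(m:ℝ)+1))^k - (1/(2*(m:ℝ)+1))^k) := by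
    intro m
    have hB0 : (2*(m:ℝ)+1) ≠ 0 := (hB m).ne'
    rw [F]
    push_cast
    field_simp
    rw [div_pow, div_pow, one_pow, ← sub_div, mul_assoc, mul_div_cancel₀ _ (pow_ne_zero k hB0)]
  simp only [heq]
  have h1 := (key_tendsto d hd).pow k
  have h2 := tendsto_inv_two_mul_add_one.pow k
  have h3 := ((h1.sub h2).const_mul ((μ d : ℝ)))
  have hval : (μ d:ℝ) * ((1/(d:ℝ))^k - (0:ℝ)^k) = (μ d:ℝ)/(d:ℝ)^k := by
    rw [zero_pow hk.ne', sub_zero, div_pow, one_pow, mul_one_div]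
  exact hval ▸ h3


lemma F_bound (k d m : ℕ) (hk : 0 < k) : |F k d m| ≤ 2^k/(d:ℝ)^k := by
  rcases Nat.eq_zero_or_pos d with rfl | hd
  · rw [F_zero]
    rw [abs_zero]
    positivity
  rcases le_or_gt d m with hdm | hdm
  swap
  · rw [F_of_lt hdm, abs_zero]
    positivity
  have hd' : (0:ℝ) < d := by positivity
  have hB : (0:ℝ) < 2*(m:ℝ)+1 := by positivity
  set A : ℝ := ((2*(m/d)+1 : ℕ) : ℝ) with hA
  have hA1 : (1:ℝ) ≤ A := by
    rw [hA]
    exact_mod_cast Nat.succ_le_succ (Nat.zero_le _)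
  have hAk : (1:ℝ) ≤ A^k := one_le_pow₀ hA1
  have h1 : |F k d m| ≤ (A^k - 1)/(2*(m:ℝ)+1)^k := by
    rw [F, abs_div, abs_mul, abs_of_nonneg (by linarith : (0:ℝ) ≤ A^k - 1),
      abs_of_pos (pow_pos hB k)]
    have hmu : |(μ d : ℝ)| ≤ 1 := by exact_mod_cast (abs_moebius_le_one (n := d))
    have := mul_le_of_le_one_left (by linarith : (0:ℝ) ≤ A^k - 1) hmu
    exact div_le_div_of_nonneg_right this (pow_pos hB k).le |>.trans_eq rfl
  refine h1.trans ?_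
  have h2 : A/(2*(m:ℝ)+1) ≤ 2/d := by
    rw [div_le_div_iff₀ hB hd']
    have hq : ((m/d : ℕ):ℝ)*d ≤ m := by exact_mod_cast Nat.div_mul_le_self m d
    have hdm' : (d:ℝ) ≤ m := by exact_mod_cast hdm
    rw [hA]
    push_cast
    nlinarith
  have h3 : (A/(2*(m:ℝ)+1))^k ≤ (2/(d:ℝ))^k :=
    pow_le_pow_left₀ (by positivity) h2 k
  rw [div_pow, div_pow] at h3
  calc (A^k - 1)/(2*(m:ℝ)+1)^k ≤ A^k/(2*(m:ℝ)+1)^k := by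
        apply div_le_div_of_nonneg_right (by linarith) (pow_pos hB k).le |>.trans_eq rfl
    _ ≤ 2^k/(d:ℝ)^k := h3

lemma summable_bound (k : ℕ) (hk : 1 < k) : Summable (fun d : ℕ => 2^k/(d:ℝ)^k) := by
  have := (Real.summable_one_div_nat_pow (p := k)).mpr hk
  have h2 := this.mul_left ((2:ℝ)^k)
  refine h2.congr fun d => ?_
  rw [mul_one_div]

lemma ratio_eq (k m : ℕ) (hk : 0 < k) :
    ((((box k m).filter (fun z => z ≠ 0 ∧
        Finset.univ.gcd (fun i => (z i).natAbs) = 1)).card : ℝ)) / ((2*(m:ℝ)+1)^k) =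
    ∑' d : ℕ, F k d m := by
  rw [tsum_eq_sum (s := Finset.Icc 1 m) (f := fun d => F k d m) ?_]
  · have h := card_visible k m hk
    have hcast : ((((box k m).filter (fun z => z ≠ 0 ∧
        Finset.univ.gcd (fun i => (z i).natAbs) = 1)).card : ℝ)) =
        ∑ d ∈ Finset.Icc 1 m, (μ d : ℝ) * (((2*(m/d)+1 : ℕ) : ℝ)^k - 1) := by
      have := congrArg (fun z : ℤ => (z : ℝ)) h
      push_cast at this ⊢
      convert this using 2
      rw [← Int.natCast_div, Int.cast_natCast]
    rw [hcast, Finset.sum_div]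
    refine Finset.sum_congr rfl fun d _ => ?_
    rw [F, mul_div_assoc]
  · intro d hd
    rw [Finset.mem_Icc] at hd
    push_neg at hd
    rcases Nat.eq_zero_or_pos d with rfl | hd1
    · exact F_zero k m
    · exact F_of_lt (hd hd1)

lemma main_tendsto (k : ℕ) (hk : 1 < k) :
    Tendsto (fun m : ℕ => ((((box k m).filter (fun z => z ≠ 0 ∧
        Finset.univ.gcd (fun i => (z i).natAbs) = 1)).card : ℝ)) / ((2*(m:ℝ)+1)^k))
      atTop (nhds (∑' d : ℕ, (μ d : ℝ)/(d:ℝ)^k)) := by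
  have hk0 : 0 < k := by omega
  simp only [fun m => ratio_eq k m hk0]
  apply tendsto_tsum_of_dominated_convergence (summable_bound k hk)
  · intro d
    rcases Nat.eq_zero_or_pos d with rfl | hd
    · simp only [F_zero]
      have h0 : (μ 0 : ℝ)/((0:ℕ):ℝ)^k = 0 := by simp
      rw [h0]
      exact tendsto_const_nhds
    · exact F_tendsto k d hk0 hd
  · filter_upwards with m d
    exact F_bound k d m hk0

lemma lseries_link (k : ℕ) (hk : 1 < k) :
    (∑' n : ℕ, (1:ℝ)/(n:ℝ)^k) * (∑' d : ℕ, (μ d : ℝ)/(d:ℝ)^k) = 1 := by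
  have hk0 : k ≠ 0 := by omega
  have hs : 1 < (k : ℂ).re := by
    simp only [Complex.natCast_re]
    exact_mod_cast hk
  have h := LSeries_one_mul_Lseries_moebius hs
  have h1 : LSeries 1 (k : ℂ) = ((∑' n : ℕ, (1:ℝ)/(n:ℝ)^k : ℝ) : ℂ) := by
    rw [LSeries, Complex.ofReal_tsum]
    refine tsum_congr fun n => ?_
    rw [LSeries.term_def]
    rcases eq_or_ne n 0 with rfl | hn
    · simp [zero_pow hk0]
    · rw [if_neg hn, Complex.cpow_natCast]
      push_cast
      simp
  have h2 : LSeries (fun n => ((μ n : ℤ) : ℂ)) (k : ℂ) =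
      ((∑' d : ℕ, (μ d : ℝ)/(d:ℝ)^k : ℝ) : ℂ) := by
    rw [LSeries, Complex.ofReal_tsum]
    refine tsum_congr fun n => ?_
    rw [LSeries.term_def]
    rcases eq_or_ne n 0 with rfl | hn
    · simp
    · rw [if_neg hn, Complex.cpow_natCast]
      push_cast
      ring
  rw [h1, h2, ← Complex.ofReal_mul, show (1:ℂ) = ((1:ℝ):ℂ) from rfl] at h
  exact_mod_cast h

lemma pnat_sum (k : ℕ) (hk : 0 < k) :
    (∑' n : ℕ+, (1:ℝ)/(n:ℝ)^k) = ∑' n : ℕ, (1:ℝ)/(n:ℝ)^k := by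
  have hcongr : (fun n : ℕ+ => (1:ℝ)/(n:ℝ)^k) = fun n : ℕ+ => (1:ℝ)/(((n:ℕ)):ℝ)^k := by
    norm_cast
  rw [hcongr]
  apply Function.Injective.tsum_eq (g := (PNat.val : ℕ+ → ℕ)) (f := fun n : ℕ => (1:ℝ)/(n:ℝ)^k)
  · exact fun a b h => PNat.coe_injective h
  · intro n hn
    rcases Nat.eq_zero_or_pos n with rfl | hpos
    · exfalso
      apply hn
      simp [zero_pow hk.ne']
    · exact ⟨⟨n, hpos⟩, rfl⟩

lemma tendsto_nat_div_const (t : ℕ) (ht : 0 < t) :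
    Tendsto (fun n : ℕ => n / t) atTop atTop := by
  apply tendsto_atTop_atTop.mpr
  intro b
  exact ⟨b * t, fun n hn => (Nat.le_div_iff_mul_le ht).mpr hn⟩

end DensityVisible

open DensityVisible in
theorem density_t_visible (k t : ℕ) (hk : 2 ≤ k) (ht : 1 ≤ t) :
    Tendsto (fun n : ℕ =>
        (Nat.card {z : Fin k → ℤ // (∀ i, |z i| ≤ (n : ℤ)) ∧ z ≠ 0 ∧
            Finset.univ.gcd (fun i => (z i).natAbs) = t} : ℝ) /
        (Nat.card {z : Fin k → ℤ // ∀ i, |z i| ≤ (n : ℤ)} : ℝ))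
      atTop (nhds (1 / ((t : ℝ) ^ k * (∑' n : ℕ+, (1 : ℝ) / (n : ℝ) ^ k)))) := by
  classical
  have hk0 : 0 < k := by omega
  have hk1 : 1 < k := hk
  have ht0 : 0 < t := ht
  set c : ℝ := ∑' d : ℕ, (μ d : ℝ)/(d:ℝ)^k with hc
  set S : ℝ := ∑' n : ℕ+, (1:ℝ)/(n:ℝ)^k with hSdef
  have hprod : S * c = 1 := by
    rw [hSdef, pnat_sum k hk0]
    exact lseries_link k hk1
  set Vc : ℕ → ℕ := fun m => ((box k m).filter (fun w => w ≠ 0 ∧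
      Finset.univ.gcd (fun i => (w i).natAbs) = 1)).card with hVc
  have hden : ∀ n : ℕ, (Nat.card {z : Fin k → ℤ // ∀ i, |z i| ≤ (n : ℤ)} : ℝ)
      = (2*(n:ℝ)+1)^k := by
    intro n
    have e : Nat.card {z : Fin k → ℤ // ∀ i, |z i| ≤ (n : ℤ)} = (box k n).card := by
      rw [← Nat.card_eq_finsetCard]
      exact Nat.card_congr (Equiv.subtypeEquivRight fun z => (mem_box' k).symm)
    rw [e, card_box]
    push_cast
    ring
  have hnum : ∀ n : ℕ, Nat.card {z : Fin k → ℤ // (∀ i, |z i| ≤ (n : ℤ)) ∧ z ≠ 0 ∧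
      Finset.univ.gcd (fun i => (z i).natAbs) = t} = Vc (n/t) := by
    intro n
    have e : Nat.card {z : Fin k → ℤ // (∀ i, |z i| ≤ (n : ℤ)) ∧ z ≠ 0 ∧
        Finset.univ.gcd (fun i => (z i).natAbs) = t} =
        ((box k n).filter (fun z => z ≠ 0 ∧
          Finset.univ.gcd (fun i => (z i).natAbs) = t)).card := by
      rw [← Nat.card_eq_finsetCard]
      refine Nat.card_congr (Equiv.subtypeEquivRight fun z => ?_)
      rw [Finset.mem_filter, mem_box' k]
    rw [e, hVc]
    exact card_gcd_eq k n t ht0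
  have l1 : Tendsto (fun n : ℕ => (Vc (n/t) : ℝ)/(2*((n/t : ℕ):ℝ)+1)^k)
      atTop (nhds c) :=
    (main_tendsto k hk1).comp (tendsto_nat_div_const t ht0)
  have l2 : Tendsto (fun n : ℕ => ((2*((n/t : ℕ):ℝ)+1)/(2*(n:ℝ)+1))^k)
      atTop (nhds ((1/(t:ℝ))^k)) := (key_tendsto t ht0).pow k
  have hlim := l1.mul l2
  have hS0 : S ≠ 0 := by
    intro h
    rw [h, zero_mul] at hprod
    exact zero_ne_one hprod
  have htR : (t:ℝ) ≠ 0 := by positivity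
  have hval : c * (1/(t:ℝ))^k = 1/((t:ℝ)^k * S) := by
    have hcS : c = 1/S := eq_one_div_of_mul_eq_one_left (by rwa [mul_comm] at hprod)
    rw [hcS, div_pow, one_pow, div_mul_div_comm, one_mul, mul_comm]
  rw [hval] at hlim
  refine Tendsto.congr (fun n => ?_) hlim
  rw [hnum n, hden n]
  have hb : ((2*((n/t : ℕ):ℝ)+1))^k ≠ 0 := by positivity
  rw [div_pow, div_mul_div_comm, mul_comm ((Vc (n/t) : ℝ)) _, mul_div_mul_left _ _ hb]
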